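/- Under the same setting, suppose additionally that e = [ε; 0] with ε ∈ ℝ^M having independent components with mean zero and variance σ². Then E[‖u*_ξ − u^opt‖₂²] ≤ (ξM ‖η̃^opt‖₂ / s_min(A(ξ)))² + σ² trace(A(ξ)^{-1} Σ A(ξ)^{-T}), where Σ = [[I_M, 0],[0, 0]]. -/

import Mathlib

open Matrix MeasureTheory ProbabilityTheory

set_option maxHeartbeats 1000000 in
/-- mean-squared-error bound for the regularized PBDW estimator:
`E‖u*_ξ − u^opt‖₂² ≤ (ξM‖η̃^opt‖₂/s_min)² + σ² trace(A⁻¹ Σ A⁻ᵀ)`. -/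
theorem stmt_15 {M N : ℕ} {Ω : Type*} [MeasurableSpace Ω]
    (μ : Measure Ω) [IsProbabilityMeasure μ]
    (A : Matrix (Fin M ⊕ Fin N) (Fin M ⊕ Fin N) ℝ) (hA : IsUnit A)
    (ξ : ℝ) (hξ : 0 < ξ) (hM : 0 < M)
    (uopt : (Fin M ⊕ Fin N) → ℝ) (ηopt : Fin M → ℝ)
    (σ : ℝ)
    (ε : Ω → Fin M → ℝ)
    (hmeas : ∀ m, Measurable fun ω => ε ω m)
    (hindep : iIndepFun (m := fun _ : Fin M => (inferInstance : MeasurableSpace ℝ))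
      (fun m ω => ε ω m) μ)
    (hInt : ∀ m, Integrable (fun ω => ε ω m) μ)
    (hInt2 : ∀ m, Integrable (fun ω => (ε ω m) ^ 2) μ)
    (hmean : ∀ m, ∫ ω, ε ω m ∂μ = 0)
    (hvar : ∀ m, ∫ ω, (ε ω m) ^ 2 ∂μ = σ ^ 2)
    (ustar : Ω → (Fin M ⊕ Fin N) → ℝ)
    (heq : ∀ ω, A.mulVec (ustar ω) =
      A.mulVec uopt - (ξ * (M : ℝ)) • Sum.elim ηopt (fun _ => (0 : ℝ)) +
        Sum.elim (ε ω) (fun _ => (0 : ℝ)))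
    (smin : ℝ) (hsmin : 0 < smin)
    (hs : ∀ v : (Fin M ⊕ Fin N) → ℝ,
      smin * Real.sqrt (∑ i, v i ^ 2) ≤ Real.sqrt (∑ i, A.mulVec v i ^ 2)) :
    ∫ ω, ∑ i, (ustar ω i - uopt i) ^ 2 ∂μ ≤
      (ξ * (M : ℝ) * Real.sqrt (∑ m, ηopt m ^ 2) / smin) ^ 2 +
        σ ^ 2 * (A⁻¹ * Matrix.fromBlocks (1 : Matrix (Fin M) (Fin M) ℝ) 0 0
          (0 : Matrix (Fin N) (Fin N) ℝ) * A⁻¹ᵀ).trace := by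
  classical
  have hdet : IsUnit A.det := (Matrix.isUnit_iff_isUnit_det A).mp hA
  set B := A⁻¹ with hBdef
  have hBA : B * A = 1 := Matrix.nonsing_inv_mul A hdet
  have hAB : A * B = 1 := Matrix.mul_nonsing_inv A hdet
  set η : (Fin M ⊕ Fin N) → ℝ := Sum.elim ηopt (fun _ => 0) with hηdef
  set c : ℝ := ξ * M with hcdef
  have hc : 0 ≤ c := by positivity
  set b : (Fin M ⊕ Fin N) → ℝ := fun i => c * B.mulVec η i with hbdef
  set C : (Fin M ⊕ Fin N) → Fin M → ℝ := fun i m => B i (Sum.inl m) with hCdef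
  -- decomposition of the error
  have hdecomp : ∀ ω i, ustar ω i - uopt i = (∑ m, C i m * ε ω m) - b i := by
    intro ω i
    have h2 : A.mulVec (ustar ω - uopt) = Sum.elim (ε ω) (fun _ => 0) - c • η := by
      rw [Matrix.mulVec_sub, heq ω]; abel
    have h3 : ustar ω - uopt = B.mulVec (Sum.elim (ε ω) (fun _ => 0) - c • η) := by
      calc ustar ω - uopt = (B * A).mulVec (ustar ω - uopt) := by
            rw [hBA, Matrix.one_mulVec]
        _ = B.mulVec (A.mulVec (ustar ω - uopt)) := (Matrix.mulVec_mulVec _ _ _).symm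
        _ = B.mulVec (Sum.elim (ε ω) (fun _ => 0) - c • η) := by rw [h2]
    have h4 := congrFun h3 i
    simp only [Pi.sub_apply] at h4
    rw [h4, Matrix.mulVec_sub, Pi.sub_apply, Matrix.mulVec_smul, Pi.smul_apply,
      smul_eq_mul]
    congr 1
    simp [Matrix.mulVec, dotProduct, Fintype.sum_sum_type, hCdef]
  -- expectations of products
  have hIntProd : ∀ m n : Fin M, Integrable (fun ω => ε ω m * ε ω n) μ := by
    intro m n
    by_cases h : m = n
    · subst h; simpa [pow_two] using hInt2 m
    · exact (hindep.indepFun h).integrable_mul (hInt m) (hInt n)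
  have hEprod : ∀ m n : Fin M, ∫ ω, ε ω m * ε ω n ∂μ = if m = n then σ ^ 2 else 0 := by
    intro m n
    by_cases h : m = n
    · subst h; simp only [if_pos rfl, ← hvar m]; congr 1; funext ω; ring
    · rw [if_neg h]
      have := (hindep.indepFun h).integral_mul_eq_mul_integral (hInt m).1 (hInt n).1
      simpa [hmean m, hmean n] using this
  -- per-coordinate expansion
  have hfun : ∀ i, (fun ω => ((∑ m, C i m * ε ω m) - b i) ^ 2) =
      (fun ω => (∑ m, ∑ n, (C i m * C i n) * (ε ω m * ε ω n))
        - 2 * b i * (∑ m, C i m * ε ω m) + b i ^ 2) := by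
    intro i; funext ω
    have hsq : (∑ m, C i m * ε ω m) ^ 2
        = ∑ m, ∑ n, (C i m * C i n) * (ε ω m * ε ω n) := by
      rw [pow_two, Finset.sum_mul_sum]
      exact Finset.sum_congr rfl fun m _ => Finset.sum_congr rfl fun n _ => by ring
    rw [sub_sq, hsq]; ring
  have hI1 : ∀ i, Integrable (fun ω => ∑ m, ∑ n, (C i m * C i n) * (ε ω m * ε ω n)) μ :=
    fun i => integrable_finset_sum _ fun m _ => integrable_finset_sum _ fun n _ =>
      (hIntProd m n).const_mul _
  have hI2 : ∀ i, Integrable (fun ω => 2 * b i * (∑ m, C i m * ε ω m)) μ :=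
    fun i => (integrable_finset_sum _ fun m _ => (hInt m).const_mul _).const_mul _
  have hInti : ∀ i, Integrable (fun ω => ((∑ m, C i m * ε ω m) - b i) ^ 2) μ := by
    intro i
    rw [hfun i]
    exact Integrable.add (Integrable.sub (hI1 i) (hI2 i)) (integrable_const _)
  have hEi : ∀ i, ∫ ω, ((∑ m, C i m * ε ω m) - b i) ^ 2 ∂μ
      = σ ^ 2 * (∑ m, C i m ^ 2) + b i ^ 2 := by
    intro i
    rw [hfun i]
    rw [integral_add
        (f := fun ω => (∑ m, ∑ n, (C i m * C i n) * (ε ω m * ε ω n))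
          - 2 * b i * (∑ m, C i m * ε ω m))
        (g := fun _ => b i ^ 2)
        (Integrable.sub (hI1 i) (hI2 i)) (integrable_const _),
      integral_sub (f := fun ω => ∑ m, ∑ n, (C i m * C i n) * (ε ω m * ε ω n))
        (g := fun ω => 2 * b i * (∑ m, C i m * ε ω m)) (hI1 i) (hI2 i)]
    have h1 : ∫ ω, (∑ m, ∑ n, (C i m * C i n) * (ε ω m * ε ω n)) ∂μ
        = σ ^ 2 * ∑ m, C i m ^ 2 := by
      rw [integral_finset_sum _ fun m _ => integrable_finset_sum _ fun n _ =>
        (hIntProd m n).const_mul _]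
      have : ∀ m : Fin M, ∫ ω, (∑ n, (C i m * C i n) * (ε ω m * ε ω n)) ∂μ
          = C i m ^ 2 * σ ^ 2 := by
        intro m
        rw [integral_finset_sum _ fun n _ => (hIntProd m n).const_mul _]
        have : ∀ n : Fin M, ∫ ω, (C i m * C i n) * (ε ω m * ε ω n) ∂μ
            = (C i m * C i n) * (if m = n then σ ^ 2 else 0) := by
          intro n; rw [integral_const_mul, hEprod]
        simp only [this, mul_ite, mul_zero, Finset.sum_ite_eq, Finset.mem_univ, if_pos]
        ring
      simp only [this]
      rw [Finset.mul_sum]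
      exact Finset.sum_congr rfl fun m _ => by ring
    have h2 : ∫ ω, 2 * b i * (∑ m, C i m * ε ω m) ∂μ = 0 := by
      rw [integral_const_mul, integral_finset_sum _ fun m _ => (hInt m).const_mul _]
      simp [integral_const_mul, hmean]
    rw [h1, h2]
    simp [measure_univ]
  -- total expectation
  have htotal : ∫ ω, ∑ i, (ustar ω i - uopt i) ^ 2 ∂μ
      = σ ^ 2 * (∑ i, ∑ m, C i m ^ 2) + ∑ i, b i ^ 2 := by
    have : (fun ω => ∑ i, (ustar ω i - uopt i) ^ 2)
        = fun ω => ∑ i, ((∑ m, C i m * ε ω m) - b i) ^ 2 := by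
      funext ω; exact Finset.sum_congr rfl fun i _ => by rw [hdecomp ω i]
    rw [this, integral_finset_sum _ fun i _ => hInti i]
    simp only [hEi]
    rw [Finset.sum_add_distrib, Finset.mul_sum]
  -- trace identity
  have htr : (B * Matrix.fromBlocks (1 : Matrix (Fin M) (Fin M) ℝ) 0 0
      (0 : Matrix (Fin N) (Fin N) ℝ) * Bᵀ).trace = ∑ i, ∑ m, C i m ^ 2 := by
    rw [Matrix.trace]
    refine Finset.sum_congr rfl fun i _ => ?_
    simp only [Matrix.diag_apply, Matrix.mul_apply, Matrix.transpose_apply,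
      Fintype.sum_sum_type, Matrix.fromBlocks_apply₁₁, Matrix.fromBlocks_apply₁₂,
      Matrix.fromBlocks_apply₂₁, Matrix.fromBlocks_apply₂₂, Matrix.zero_apply,
      Matrix.one_apply, mul_zero, zero_mul, Finset.sum_const_zero, add_zero,
      mul_ite, ite_mul, mul_one, Finset.sum_ite_eq, Finset.sum_ite_eq', Finset.mem_univ, if_pos]
    exact Finset.sum_congr rfl fun m _ => by rw [hCdef, pow_two]
  -- bias bound
  have hbias : ∑ i, b i ^ 2 ≤ (c * Real.sqrt (∑ m, ηopt m ^ 2) / smin) ^ 2 := by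
    have hAb : A.mulVec b = c • η := by
      have : b = c • B.mulVec η := by funext i; simp [hbdef]
      rw [this, Matrix.mulVec_smul, Matrix.mulVec_mulVec, hAB, Matrix.one_mulVec]
    have hsum : ∑ i, A.mulVec b i ^ 2 = c ^ 2 * ∑ m, ηopt m ^ 2 := by
      rw [hAb]
      simp [Fintype.sum_sum_type, hηdef, mul_pow, Finset.mul_sum]
    have h5 := hs b
    rw [hsum] at h5
    have h6 : Real.sqrt (c ^ 2 * ∑ m, ηopt m ^ 2)
        = c * Real.sqrt (∑ m, ηopt m ^ 2) := by
      rw [Real.sqrt_mul (sq_nonneg c), Real.sqrt_sq hc]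
    rw [h6] at h5
    have h7 : Real.sqrt (∑ i, b i ^ 2) ≤ c * Real.sqrt (∑ m, ηopt m ^ 2) / smin := by
      rw [le_div_iff₀ hsmin]; linarith [h5]
    have h8 : ∑ i, b i ^ 2 = Real.sqrt (∑ i, b i ^ 2) ^ 2 :=
      (Real.sq_sqrt (Finset.sum_nonneg fun i _ => sq_nonneg _)).symm
    rw [h8]
    exact pow_le_pow_left₀ (Real.sqrt_nonneg _) h7 2
  rw [htotal, htr]
  have hb2 := hbias
  rw [hcdef] at hb2
  linarith
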